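/- Let X be a simplicial set, x an n-simplex of X with n ≥ 1, and 0 ≤ i ≤ n. Then i reduces x if and only if x = xδ_iσ_i (requiring i ≤ n−1) or x = xδ_iσ_{i−1} (requiring i ≥ 1). -/

import Mathlib

open CategoryTheory Simplicial

namespace AufhebungSSet

/-- An `n`-simplex `x` of a simplicial set `X` is degenerate if it is the image of a
simplex of strictly smaller dimension under the action of an epimorphism of `Δ`. -/
def IsDegen (X : SSet) {n : ℕ} (x : X _⦋n⦌) : Prop :=
  ∃ m : ℕ, m < n ∧ ∃ ε : (⦋n⦌ : SimplexCategory) ⟶ ⦋m⦌,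
    Function.Surjective ε.toOrderHom ∧ ∃ y : X _⦋m⦌, x = X.map ε.op y

/-- The degeneracy `dgn x = n - k`, where `k` is the least dimension from which `x`
is the image of a simplex under the action of an epimorphism; by the Eilenberg–Zilber
lemma this is the dimension of the nondegenerate simplex of which `x` is a degeneracy. -/
noncomputable def dgn (X : SSet) {n : ℕ} (x : X _⦋n⦌) : ℕ :=
  n - sInf {k | ∃ ε : (⦋n⦌ : SimplexCategory) ⟶ ⦋k⦌,
    Function.Surjective ε.toOrderHom ∧ ∃ y : X _⦋k⦌, x = X.map ε.op y}
open SimplexCategory in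
lemma coe_δ {n : ℕ} (i : Fin (n + 2)) (a : Fin (n + 1)) :
    (((SimplexCategory.δ i).toOrderHom a : Fin (n+2)) : ℕ) =
      if (a : ℕ) < (i : ℕ) then (a : ℕ) else (a : ℕ) + 1 := by
  change ((Fin.succAbove i a : Fin (n+2)) : ℕ) = _
  rcases lt_or_ge (a : ℕ) (i : ℕ) with h | h
  · rw [Fin.succAbove_of_castSucc_lt _ _ (by simpa [Fin.lt_iff_val_lt_val] using h)]; simp [h]
  · rw [Fin.succAbove_of_le_castSucc _ _ (by simpa [Fin.le_iff_val_le_val] using h)]; simp; omega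

open SimplexCategory in
lemma coe_σ {n : ℕ} (j : Fin (n + 1)) (a : Fin (n + 2)) :
    (((SimplexCategory.σ j).toOrderHom a : Fin (n+1)) : ℕ) =
      if (a : ℕ) ≤ (j : ℕ) then (a : ℕ) else (a : ℕ) - 1 := by
  change ((Fin.predAbove j a : Fin (n+1)) : ℕ) = _
  rcases le_or_gt (a : ℕ) (j : ℕ) with h | h
  · rw [Fin.predAbove_of_le_castSucc _ _ (by simpa [Fin.le_iff_val_le_val] using h)]; simp [h]
  · rw [Fin.predAbove_of_castSucc_lt _ _ (by simpa [Fin.lt_iff_val_lt_val] using h)]; simp; omega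

open SimplexCategory in
lemma exists_factorization {a b : ℕ} (f : (⦋a⦌ : SimplexCategory) ⟶ ⦋b⦌) :
    ∃ (l : ℕ) (e : (⦋a⦌ : SimplexCategory) ⟶ ⦋l⦌) (μ : (⦋l⦌ : SimplexCategory) ⟶ ⦋b⦌),
      Function.Surjective e.toOrderHom ∧ Function.Injective μ.toOrderHom ∧ e ≫ μ = f := by
  refine ⟨(Limits.image f).len,
    Limits.factorThruImage f ≫ eqToHom (mk_len _).symm,
    eqToHom (mk_len _) ≫ Limits.image.ι f, ?_, ?_, ?_⟩
  · rw [← SimplexCategory.epi_iff_surjective]; infer_instance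
  · rw [← SimplexCategory.mono_iff_injective]; infer_instance
  · simp

/-- The set of dimensions from which `x` is the degeneracy of a simplex. -/
def S (X : SSet) {n : ℕ} (x : X _⦋n⦌) : Set ℕ :=
  {k | ∃ ε : (⦋n⦌ : SimplexCategory) ⟶ ⦋k⦌,
    Function.Surjective ε.toOrderHom ∧ ∃ y : X _⦋k⦌, x = X.map ε.op y}

lemma self_mem_S (X : SSet) {n : ℕ} (x : X _⦋n⦌) : n ∈ S X x :=
  ⟨𝟙 _, fun b => ⟨b, rfl⟩, x, by simp⟩

lemma S_nonempty (X : SSet) {n : ℕ} (x : X _⦋n⦌) : (S X x).Nonempty :=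
  ⟨n, self_mem_S X x⟩

lemma dgn_eq (X : SSet) {n : ℕ} (x : X _⦋n⦌) : dgn X x = n - sInf (S X x) := rfl

lemma sInf_S_le (X : SSet) {n : ℕ} (x : X _⦋n⦌) : sInf (S X x) ≤ n :=
  Nat.sInf_le (self_mem_S X x)

lemma S_map (X : SSet) {n a : ℕ} (x : X _⦋n⦌) (τ : (⦋a⦌ : SimplexCategory) ⟶ ⦋n⦌)
    {k : ℕ} (hk : k ∈ S X x) : ∃ l ≤ k, l ∈ S X (X.map τ.op x) := by
  obtain ⟨ε, hs, y, hy⟩ := hk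
  obtain ⟨l, e, μ, he, hμ, hfac⟩ := exists_factorization (τ ≫ ε)
  refine ⟨l, ?_, e, he, X.map μ.op y, ?_⟩
  · have := Fintype.card_le_of_injective _ hμ
    simpa using this
  · rw [hy, ← FunctorToTypes.map_comp_apply, ← op_comp, ← hfac, op_comp,
      FunctorToTypes.map_comp_apply]

lemma sInf_S_map_le (X : SSet) {n a : ℕ} (x : X _⦋n⦌) (τ : (⦋a⦌ : SimplexCategory) ⟶ ⦋n⦌) :
    sInf (S X (X.map τ.op x)) ≤ sInf (S X x) := by
  obtain ⟨l, hl, hmem⟩ := S_map X x τ (Nat.sInf_mem (S_nonempty X x))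
  exact le_trans (Nat.sInf_le hmem) hl

/-- `i` reduces `x` when `dgn (x δᵢ) = dgn x - 1`. -/
def Reduces (X : SSet) {n : ℕ} (i : Fin (n + 2)) (x : X _⦋n + 1⦌) : Prop :=
  dgn X (X.map (SimplexCategory.δ i).op x) + 1 = dgn X x

/-- `i` properly reduces `x` when `x = x δᵢ σᵢ`. -/
def ProperlyReduces (X : SSet) {n : ℕ} (i : Fin (n + 1)) (x : X _⦋n + 1⦌) : Prop :=
  x = X.map (SimplexCategory.σ i).op (X.map (SimplexCategory.δ i.castSucc).op x)

/-- A `(K+2)`-sphere: a family `c₀, …, c_{K+2}` of `(K+1)`-simplices satisfying the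
cycle equations `cⱼ δᵢ = cᵢ δ_{j-1}` for `i < j` (here reindexed: `c_{j+1} δᵢ = cᵢ δⱼ`
for `i ≤ j`). -/
def IsSphere (X : SSet) {K : ℕ} (c : Fin (K + 3) → X _⦋K + 1⦌) : Prop :=
  ∀ i j : Fin (K + 2), i ≤ j →
    X.map (SimplexCategory.δ i).op (c j.succ) = X.map (SimplexCategory.δ j).op (c i.castSucc)

/-- `y` fills the sphere `c` when `y δᵢ = cᵢ` for all `i`. -/
def IsFiller (X : SSet) {K : ℕ} (y : X _⦋K + 2⦌) (c : Fin (K + 3) → X _⦋K + 1⦌) : Prop :=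
  ∀ i : Fin (K + 3), X.map (SimplexCategory.δ i).op y = c i



open SimplexCategory in
lemma σ_surjective {n : ℕ} (j : Fin (n + 1)) :
    Function.Surjective (SimplexCategory.σ j).toOrderHom := by
  intro b
  refine ⟨(SimplexCategory.δ j.castSucc).toOrderHom b, ?_⟩
  have := congrArg (fun f => SimplexCategory.Hom.toOrderHom f b)
    (SimplexCategory.δ_comp_σ_self (i := j))
  simpa [SimplexCategory.comp_toOrderHom] using this

open SimplexCategory in
lemma eq_of_fix_A {n k : ℕ} (ε : (⦋n+1⦌ : SimplexCategory) ⟶ ⦋k⦌) (i : Fin (n + 2))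
    (h : (i : ℕ) < n + 1)
    (hval : ε.toOrderHom i = ε.toOrderHom ⟨(i : ℕ) + 1, by simp only [SimplexCategory.len_mk]; omega⟩) :
    SimplexCategory.σ ⟨(i : ℕ), h⟩ ≫ SimplexCategory.δ i ≫ ε = ε := by
  apply SimplexCategory.Hom.ext
  apply OrderHom.ext; funext a
  simp only [SimplexCategory.comp_toOrderHom, OrderHom.comp_coe, Function.comp_apply]
  by_cases ha : (a : ℕ) = (i : ℕ)
  · have h1 : (SimplexCategory.δ i).toOrderHom
        ((SimplexCategory.σ ⟨(i : ℕ), h⟩).toOrderHom a) = (⟨(i : ℕ) + 1, by omega⟩ : Fin (n + 2)) := by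
      apply Fin.ext
      rw [coe_δ, coe_σ]
      simp only []
      split_ifs <;> omega
    have ha' : a = i := Fin.ext ha
    rw [h1]
    exact hval.symm.trans (congrArg _ ha').symm
  · have h1 : (SimplexCategory.δ i).toOrderHom
        ((SimplexCategory.σ ⟨(i : ℕ), h⟩).toOrderHom a) = a := by
      apply Fin.ext
      rw [coe_δ, coe_σ]
      simp only []
      split_ifs <;> omega
    rw [h1]

open SimplexCategory in
lemma eq_of_fix_B {n k : ℕ} (ε : (⦋n+1⦌ : SimplexCategory) ⟶ ⦋k⦌) (i : Fin (n + 2))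
    (h : 0 < (i : ℕ))
    (hval : ε.toOrderHom ⟨(i : ℕ) - 1, by simp only [SimplexCategory.len_mk]; have := i.isLt; omega⟩ = ε.toOrderHom i) :
    SimplexCategory.σ ⟨(i : ℕ) - 1, by have := i.isLt; omega⟩ ≫ SimplexCategory.δ i ≫ ε
      = ε := by
  apply SimplexCategory.Hom.ext
  apply OrderHom.ext; funext a
  simp only [SimplexCategory.comp_toOrderHom, OrderHom.comp_coe, Function.comp_apply]
  by_cases ha : (a : ℕ) = (i : ℕ)
  · have h1 : (SimplexCategory.δ i).toOrderHom
        ((SimplexCategory.σ ⟨(i : ℕ) - 1, by have := i.isLt; omega⟩).toOrderHom a)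
          = ⟨(i : ℕ) - 1, by have := i.isLt; omega⟩ := by
      apply Fin.ext
      rw [coe_δ, coe_σ]
      simp only []
      split_ifs <;> omega
    have ha' : a = i := Fin.ext ha
    rw [h1]
    exact hval.trans (congrArg _ ha').symm
  · have h1 : (SimplexCategory.δ i).toOrderHom
        ((SimplexCategory.σ ⟨(i : ℕ) - 1, by have := i.isLt; omega⟩).toOrderHom a) = a := by
      apply Fin.ext
      rw [coe_δ, coe_σ]
      simp only []
      split_ifs <;> omega
    rw [h1]

open SimplexCategory in
lemma x_eq_of_comp_eq {n k : ℕ} (X : SSet) (x : X _⦋n+1⦌) (y : X _⦋k⦌)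
    (ε : (⦋n+1⦌ : SimplexCategory) ⟶ ⦋k⦌) (hy : x = X.map ε.op y)
    (j : Fin (n + 1)) (i : Fin (n + 2))
    (hcomp : SimplexCategory.σ j ≫ SimplexCategory.δ i ≫ ε = ε) :
    x = X.map (SimplexCategory.σ j).op (X.map (SimplexCategory.δ i).op x) := by
  have h := congrArg (fun φ => X.map (Quiver.Hom.op φ) y) hcomp
  simp only [op_comp, FunctorToTypes.map_comp_apply] at h
  rw [← hy] at h
  exact h.symm

open SimplexCategory in
lemma sInf_S_eq_of_eq {n : ℕ} (X : SSet) (i : Fin (n + 2)) (j : Fin (n + 1)) (x : X _⦋n+1⦌)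
    (hx : x = X.map (SimplexCategory.σ j).op (X.map (SimplexCategory.δ i).op x)) :
    sInf (S X (X.map (SimplexCategory.δ i).op x)) = sInf (S X x) := by
  refine le_antisymm (sInf_S_map_le X x _) ?_
  obtain ⟨ε', hs', z, hz⟩ :=
    Nat.sInf_mem (S_nonempty X (X.map (SimplexCategory.δ i).op x))
  apply Nat.sInf_le
  refine ⟨SimplexCategory.σ j ≫ ε', ?_, z, ?_⟩
  · rw [SimplexCategory.comp_toOrderHom]
    exact hs'.comp (σ_surjective j)
  · rw [op_comp, FunctorToTypes.map_comp_apply, ← hz]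
    exact hx

open SimplexCategory in
lemma caseC {n k : ℕ} (X : SSet) (x : X _⦋n+1⦌) (i : Fin (n + 2))
    (ε : (⦋n+1⦌ : SimplexCategory) ⟶ ⦋k⦌)
    (y : X _⦋k⦌) (hy : x = X.map ε.op y)
    (hA : ∀ _ : (i : ℕ) < n + 1, ε.toOrderHom i ≠ ε.toOrderHom ⟨(i : ℕ) + 1, by simp only [SimplexCategory.len_mk]; omega⟩)
    (hB : ∀ _ : 0 < (i : ℕ),
      ε.toOrderHom ⟨(i : ℕ) - 1, by simp only [SimplexCategory.len_mk]; have := i.isLt; omega⟩ ≠ ε.toOrderHom i) :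
    ∃ l < k, l ∈ S X (X.map (SimplexCategory.δ i).op x) := by
  have mono := ε.toOrderHom.monotone
  have notsurj : ¬ Function.Surjective (SimplexCategory.δ i ≫ ε).toOrderHom := by
    intro hsurj
    obtain ⟨a, ha⟩ := hsurj (ε.toOrderHom i)
    simp only [SimplexCategory.comp_toOrderHom, OrderHom.comp_coe, Function.comp_apply] at ha
    have hval := coe_δ i a
    set v := (SimplexCategory.δ i).toOrderHom a with hv
    by_cases hlt : (v : ℕ) < (i : ℕ)
    · have h0 : 0 < (i : ℕ) := by omega
      have hi1 : (i : ℕ) - 1 < n + 2 := by have := i.isLt; omega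
      have h1 : ε.toOrderHom v ≤ ε.toOrderHom ⟨(i : ℕ) - 1, hi1⟩ :=
        mono (by simp only [Fin.le_def]; omega)
      have h2 : ε.toOrderHom ⟨(i : ℕ) - 1, hi1⟩ ≤ ε.toOrderHom i :=
        mono (by simp only [Fin.le_def]; omega)
      have : ε.toOrderHom v < ε.toOrderHom i :=
        lt_of_le_of_lt h1 (lt_of_le_of_ne h2 (hB h0))
      exact absurd ha (ne_of_lt this)
    · have hgt : (i : ℕ) < (v : ℕ) := by
        by_cases h' : (a : ℕ) < (i : ℕ) <;> simp [h'] at hval <;> omega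
      have hin : (i : ℕ) < n + 1 := by
        have hvlt := v.isLt
        simp only [SimplexCategory.len_mk] at hvlt
        omega
      have h1 : ε.toOrderHom ⟨(i : ℕ) + 1, by simp only [SimplexCategory.len_mk]; omega⟩ ≤ ε.toOrderHom v :=
        mono (by simp only [Fin.le_def]; omega)
      have : ε.toOrderHom i < ε.toOrderHom v :=
        lt_of_lt_of_le (lt_of_le_of_ne (mono (by simp only [Fin.le_def]; omega)) (hA hin)) h1
      exact absurd ha (ne_of_gt this)
  obtain ⟨l, e, μ, he, hμ, hfac⟩ := exists_factorization (SimplexCategory.δ i ≫ ε)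
  have hlk : l + 1 ≤ k + 1 := by simpa using Fintype.card_le_of_injective _ hμ
  have hne : l ≠ k := by
    intro h
    subst h
    have hμs : Function.Surjective μ.toOrderHom :=
      Finite.surjective_of_injective hμ
    apply notsurj
    rw [← hfac, SimplexCategory.comp_toOrderHom]
    exact hμs.comp he
  refine ⟨l, by omega, e, he, X.map μ.op y, ?_⟩
  rw [hy, ← FunctorToTypes.map_comp_apply, ← op_comp, ← hfac, op_comp]
  exact FunctorToTypes.map_comp_apply _ _ _ _

lemma reduces_iff_sInf (X : SSet) {n : ℕ} (i : Fin (n + 2)) (x : X _⦋n + 1⦌) :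
    Reduces X i x ↔ sInf (S X (X.map (SimplexCategory.δ i).op x)) = sInf (S X x) := by
  have h1 := sInf_S_le X (X.map (SimplexCategory.δ i).op x)
  have h2 := sInf_S_le X x
  unfold Reduces
  rw [dgn_eq, dgn_eq]
  change n - _ + 1 = n + 1 - _ ↔ _
  omega

/-- `i` reduces `x` if and only if `x = x δᵢ σᵢ` (when `i ≤ n-1`) or
`x = x δᵢ σ_{i-1}` (when `i ≥ 1`). -/
theorem reduces_iff (X : SSet) (n : ℕ) (x : X _⦋n + 1⦌) (i : Fin (n + 2)) :
    Reduces X i x ↔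
      ((∃ h : (i : ℕ) < n + 1,
          x = X.map (SimplexCategory.σ ⟨(i : ℕ), h⟩).op (X.map (SimplexCategory.δ i).op x)) ∨
       (∃ _ : 0 < (i : ℕ),
          x = X.map (SimplexCategory.σ ⟨(i : ℕ) - 1, by have := i.isLt; omega⟩).op
            (X.map (SimplexCategory.δ i).op x))) := by
  rw [reduces_iff_sInf]
  constructor
  · intro hEq
    obtain ⟨ε, hs, y, hy⟩ := Nat.sInf_mem (S_nonempty X x)
    by_cases hA : ∃ _ : (i : ℕ) < n + 1,
        ε.toOrderHom i = ε.toOrderHom ⟨(i : ℕ) + 1, by simp only [SimplexCategory.len_mk]; omega⟩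
    · obtain ⟨h, hval⟩ := hA
      exact Or.inl ⟨h, x_eq_of_comp_eq X x y ε hy _ i (eq_of_fix_A ε i h hval)⟩
    · by_cases hB : ∃ _ : 0 < (i : ℕ),
          ε.toOrderHom ⟨(i : ℕ) - 1, by simp only [SimplexCategory.len_mk]; have := i.isLt; omega⟩ = ε.toOrderHom i
      · obtain ⟨h, hval⟩ := hB
        exact Or.inr ⟨h, x_eq_of_comp_eq X x y ε hy _ i (eq_of_fix_B ε i h hval)⟩
      · exfalso
        push_neg at hA hB
        obtain ⟨l, hl, hmem⟩ := caseC X x i ε y hy hA hB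
        have := Nat.sInf_le hmem
        omega
  · rintro (⟨h, hx⟩ | ⟨h, hx⟩)
    · exact sInf_S_eq_of_eq X i _ x hx
    · exact sInf_S_eq_of_eq X i _ x hx


end AufhebungSSet
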